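/- Every real Banach space X with a separating polynomial admits a Lipschitz, real analytic separating function; that is, there exists a function Q : X → [0,∞) which is Lipschitz on all of X, real analytic, and satisfies Q(0) = 0 and Q(x) ≥ m‖x‖ whenever ‖x‖ ≥ M, for some constants M, m > 0. -/

import Mathlib

open scoped NNReal

/-- A continuous polynomial: a finite sum of continuous homogeneous polynomials. -/
def IsContPoly {X : Type*} [NormedAddCommGroup X] [NormedSpace ℝ X] (P : X → ℝ) : Prop :=
  ∃ (n : ℕ) (A : (k : Fin (n + 1)) → ContinuousMultilinearMap ℝ (fun _ : Fin (k : ℕ) => X) ℝ),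
    ∀ x : X, P x = ∑ k : Fin (n + 1), A k (fun _ => x)

/-- `X` admits a separating polynomial. -/
def HasSeparatingPoly (X : Type*) [NormedAddCommGroup X] [NormedSpace ℝ X] : Prop :=
  ∃ P : X → ℝ, IsContPoly P ∧ P 0 = 0 ∧ ∃ c : ℝ, 0 < c ∧ ∀ x : X, ‖x‖ = 1 → c ≤ P x


open Filter in
lemma analyticAt_rlog {t : ℝ} (ht : 0 < t) : AnalyticAt ℝ Real.log t := by
  have h2 : AnalyticAt ℝ (fun s : ℝ => Complex.log s) t := by
    apply AnalyticAt.comp (g := Complex.log)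
    · exact (analyticAt_clog (by simp [Complex.mem_slitPlane_iff]; positivity)).restrictScalars
    · exact Complex.ofRealCLM.analyticAt _
  have h1 : AnalyticAt ℝ (fun s : ℝ => (Complex.log s).re) t :=
    (Complex.reCLM.analyticAt _).comp h2
  refine h1.congr (Eventually.of_forall fun s => ?_)
  exact Complex.log_ofReal_re s

lemma analyticAt_rpow_const {t p : ℝ} (ht : 0 < t) :
    AnalyticAt ℝ (fun s : ℝ => s ^ p) t := by
  have h1 : AnalyticAt ℝ (fun s : ℝ => Real.exp (Real.log s * p)) t :=
    ((analyticAt_rlog ht).mul analyticAt_const).rexp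
  refine h1.congr ?_
  filter_upwards [Ioi_mem_nhds ht] with s hs
  rw [Real.rpow_def_of_pos hs]

lemma one_add_rpow_le {v p : ℝ} (hv : 0 ≤ v) (hp : 0 ≤ p) (hp1 : p ≤ 1) :
    (1 + v) ^ p ≤ 1 + v ^ p := by
  have := NNReal.rpow_add_le_add_rpow 1 v.toNNReal hp hp1
  have h1 : ((1 + v.toNNReal : ℝ≥0) : ℝ) = 1 + v := by
    simp [Real.coe_toNNReal v hv]
  calc (1 + v) ^ p = (((1 + v.toNNReal : ℝ≥0) : ℝ)) ^ p := by rw [h1]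
    _ = (((1 + v.toNNReal) ^ p : ℝ≥0) : ℝ) := by rw [← NNReal.coe_rpow]
    _ ≤ (((1 : ℝ≥0) ^ p + v.toNNReal ^ p : ℝ≥0) : ℝ) := by exact_mod_cast this
    _ = 1 + v ^ p := by
        push_cast
        rw [Real.one_rpow, Real.coe_toNNReal v hv]

lemma rpow_sub_rpow_le {a b p : ℝ} (hb : 0 ≤ b) (hba : b ≤ a) (hp : 0 ≤ p) (hp1 : p ≤ 1) :
    (1 + a) ^ p - (1 + b) ^ p ≤ p * (1 + b) ^ (p - 1) * (a - b) := by
  have hb1 : (0:ℝ) < 1 + b := by linarith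
  set u : ℝ := (a - b) / (1 + b) with hu
  have hu0 : 0 ≤ u := div_nonneg (by linarith) hb1.le
  have key : (1 + a) = (1 + b) * (1 + u) := by
    rw [hu, mul_add, mul_one, mul_div_cancel₀ _ hb1.ne']; ring
  have hbern : (1 + u) ^ p ≤ 1 + p * u :=
    rpow_one_add_le_one_add_mul_self (by linarith) hp hp1
  have h2 : (1 + a) ^ p ≤ (1 + b) ^ p * (1 + p * u) := by
    rw [key, Real.mul_rpow hb1.le (by linarith)]
    exact mul_le_mul_of_nonneg_left hbern (Real.rpow_nonneg hb1.le p)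
  have h3 : (1 + b) ^ p * (1 + p * u) = (1 + b) ^ p + p * ((1 + b) ^ p / (1 + b)) * (a - b) := by
    rw [hu]
    ring
  rw [Real.rpow_sub_one hb1.ne']
  linarith [h2, h3.symm ▸ h2]


lemma abs_pow_sub_pow_le' {a b s : ℝ} (ha : |a| ≤ s) (hb : |b| ≤ s) (e : ℕ) :
    |a ^ e - b ^ e| ≤ e * s ^ (e - 1) * |a - b| := by
  rcases Nat.eq_zero_or_pos e with rfl | he
  · simp
  have hs : 0 ≤ s := le_trans (abs_nonneg a) ha
  rw [← geom_sum₂_mul a b e, abs_mul]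
  have hsum : |∑ i ∈ Finset.range e, a ^ i * b ^ (e - 1 - i)| ≤ e * s ^ (e - 1) := by
    calc |∑ i ∈ Finset.range e, a ^ i * b ^ (e - 1 - i)|
        ≤ ∑ i ∈ Finset.range e, |a ^ i * b ^ (e - 1 - i)| := Finset.abs_sum_le_sum_abs _ _
      _ ≤ ∑ _i ∈ Finset.range e, s ^ (e - 1) := by
          apply Finset.sum_le_sum
          intro i hi
          rw [Finset.mem_range] at hi
          rw [abs_mul, abs_pow, abs_pow]
          calc |a| ^ i * |b| ^ (e - 1 - i) ≤ s ^ i * s ^ (e - 1 - i) := by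
                apply mul_le_mul (pow_le_pow_left₀ (abs_nonneg a) ha i)
                  (pow_le_pow_left₀ (abs_nonneg b) hb _) (by positivity) (by positivity)
            _ = s ^ (e - 1) := by
                rw [← pow_add]
                congr 1
                omega
      _ = e * s ^ (e - 1) := by rw [Finset.sum_const, Finset.card_range, nsmul_eq_mul]
  exact mul_le_mul_of_nonneg_right hsum (abs_nonneg _)

lemma exists_good_q {X : Type*} [NormedAddCommGroup X] [NormedSpace ℝ X]
    (n : ℕ) (hn : 1 ≤ n)
    (A : (k : Fin (n + 1)) → ContinuousMultilinearMap ℝ (fun _ : Fin (k : ℕ) => X) ℝ)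
    (c : ℝ) (hc : 0 < c)
    (hA0 : ∀ z : X, A 0 (fun _ => z) = 0)
    (hsph : ∀ u : X, ‖u‖ = 1 → c ≤ ∑ k : Fin (n + 1), A k (fun _ => u)) :
    ∃ (q : X → ℝ) (d : ℕ) (δ C L : ℝ), 1 ≤ d ∧ 0 < δ ∧ 0 < C ∧ 0 ≤ L ∧
      q 0 = 0 ∧ (∀ x, AnalyticAt ℝ q x) ∧
      (∀ x, δ * ‖x‖ ^ d ≤ q x) ∧ (∀ x, q x ≤ C * ‖x‖ ^ d) ∧
      (∀ x y : X, |q x - q y| ≤ L * max (max ‖x‖ ‖y‖) 1 ^ (d - 1) * ‖x - y‖) := by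
  classical
  set N := n.factorial with hN
  have hN1 : 1 ≤ N := n.factorial_pos
  set d := 2 * N with hd
  have hd1 : 1 ≤ d := by omega
  set e : Fin (n + 1) → ℕ := fun k => 2 * (N / max (k : ℕ) 1) with he
  have he1 : ∀ k, 1 ≤ e k := by
    intro k
    have hmax1 : 1 ≤ max (k : ℕ) 1 := le_max_right _ _
    have h1 : max (k : ℕ) 1 ≤ N := by
      have hkn : (k : ℕ) ≤ n := by omega
      have := Nat.self_le_factorial n
      omega
    have h2 := Nat.div_pos h1 (by omega)
    simp only [he]
    omega
  have hke : ∀ k : Fin (n + 1), (k : ℕ) ≠ 0 → (k : ℕ) * e k = d := by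
    intro k hk
    have hk1 : 1 ≤ (k : ℕ) := by omega
    have hkn : (k : ℕ) ≤ n := by omega
    have hdvd : (k : ℕ) ∣ N := Nat.dvd_factorial hk1 hkn
    simp only [he, max_eq_left hk1]
    calc (k : ℕ) * (2 * (N / (k : ℕ))) = 2 * (N / (k : ℕ) * (k : ℕ)) := by ring
      _ = 2 * N := by rw [Nat.div_mul_cancel hdvd]
  have heleqd : ∀ k, e k ≤ d := by
    intro k
    have := Nat.div_le_self N (max (k : ℕ) 1)
    simp only [he]
    omega
  have heven : ∀ k, Even (e k) := fun k => ⟨N / max (k : ℕ) 1, by simp only [he]; omega⟩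
  set q : X → ℝ := fun x => ∑ k : Fin (n + 1), (A k (fun _ => x)) ^ (e k) with hq
  have htermnn : ∀ (k) (x : X), 0 ≤ (A k (fun _ => x)) ^ (e k) :=
    fun k x => (heven k).pow_nonneg _
  have hterm0 : ∀ x : X, (A 0 (fun _ => x)) ^ (e 0) = 0 := by
    intro x
    rw [hA0 x]
    exact zero_pow (by have := he1 0; omega)
  have hzero : ∀ k : Fin (n + 1), (k : ℕ) ≠ 0 → A k (fun _ => (0 : X)) = 0 := by
    intro k hk
    have : Nonempty (Fin (k : ℕ)) := ⟨⟨0, by omega⟩⟩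
    exact (A k).map_zero
  have hq0 : q 0 = 0 := by
    simp only [hq]
    apply Finset.sum_eq_zero
    intro k _
    rcases eq_or_ne (k : ℕ) 0 with h | h
    · have hk0 : k = 0 := Fin.ext (by simpa using h)
      rw [hk0]
      exact hterm0 0
    · rw [hzero k h]
      exact zero_pow (by have := he1 k; omega)
  have hqa : ∀ x, AnalyticAt ℝ q x := by
    intro x
    apply Finset.analyticAt_fun_sum
    intro k _
    apply AnalyticAt.pow
    have h2 := AnalyticAt.comp (g := fun m : (Fin (k : ℕ) → X) => A k m)
      (f := fun y : X => (fun _ : Fin (k : ℕ) => y))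
      ((A k).analyticAt) (((ContinuousLinearMap.pi
        fun _ : Fin (k : ℕ) => ContinuousLinearMap.id ℝ X)).analyticAt x)
    exact h2
  have hhom : ∀ (t : ℝ) (x : X), q (t • x) = t ^ d * q x := by
    intro t x
    simp only [hq]
    rw [Finset.mul_sum]
    apply Finset.sum_congr rfl
    intro k _
    rcases eq_or_ne (k : ℕ) 0 with h | h
    · have hk0 : k = 0 := Fin.ext (by simpa using h)
      rw [hk0, hterm0, hterm0, mul_zero]
    · have hsmul : A k (fun _ => t • x) = (t ^ (k : ℕ)) • A k (fun _ => x) := by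
        have h1 := (A k).map_smul_univ (fun _ => t) (fun _ => x)
        simpa [Finset.prod_const] using h1
      rw [hsmul, smul_eq_mul, mul_pow, ← pow_mul, hke k h]
  -- sphere lower bound
  set m0 : ℝ := min (c / n) 1 with hm0
  have hm0pos : 0 < m0 := lt_min (by positivity) one_pos
  have hm0le : m0 ≤ 1 := min_le_right _ _
  set δ := m0 ^ d with hδ
  have hδpos : 0 < δ := pow_pos hm0pos d
  have hsphere : ∀ u : X, ‖u‖ = 1 → δ ≤ q u := by
    intro u hu
    have hsum : c ≤ ∑ k ∈ Finset.univ.erase (0 : Fin (n + 1)), A k (fun _ => u) := by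
      have h1 := hsph u hu
      rw [← Finset.add_sum_erase _ _ (Finset.mem_univ (0 : Fin (n + 1))), hA0 u, zero_add] at h1
      exact h1
    have hexists : ∃ k ∈ Finset.univ.erase (0 : Fin (n + 1)), c / n ≤ A k (fun _ => u) := by
      by_contra hcon
      push_neg at hcon
      have hne : (Finset.univ.erase (0 : Fin (n + 1))).Nonempty := by
        refine ⟨⟨1, by omega⟩, Finset.mem_erase.mpr ⟨?_, Finset.mem_univ _⟩⟩
        intro hh
        have := congrArg Fin.val hh
        simp at this
      have hlt := Finset.sum_lt_sum_of_nonempty hne hcon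
      rw [Finset.sum_const, Finset.card_erase_of_mem (Finset.mem_univ _), Finset.card_univ,
        Fintype.card_fin, nsmul_eq_mul] at hlt
      have hcast : ((n + 1 - 1 : ℕ) : ℝ) = (n : ℝ) := by norm_num
      rw [hcast] at hlt
      have hnR : (n : ℝ) ≠ 0 := by positivity
      rw [mul_div_cancel₀ _ hnR] at hlt
      linarith
    obtain ⟨k, hkmem, hkge⟩ := hexists
    have hk0 : (k : ℕ) ≠ 0 := by
      intro hh
      exact (Finset.mem_erase.mp hkmem).1 (Fin.ext (by simpa using hh))
    have hterm : δ ≤ (A k (fun _ => u)) ^ (e k) := by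
      calc δ = m0 ^ d := rfl
        _ ≤ m0 ^ (e k) := pow_le_pow_of_le_one hm0pos.le hm0le (heleqd k)
        _ ≤ (c / n) ^ (e k) := pow_le_pow_left₀ hm0pos.le (min_le_left _ _) _
        _ ≤ (A k (fun _ => u)) ^ (e k) := pow_le_pow_left₀ (by positivity) hkge _
    calc δ ≤ (A k (fun _ => u)) ^ (e k) := hterm
      _ ≤ q u := Finset.single_le_sum (fun j _ => htermnn j u) (Finset.mem_univ k)
  have hlow : ∀ x : X, δ * ‖x‖ ^ d ≤ q x := by
    intro x
    rcases eq_or_ne x 0 with rfl | hx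
    · rw [hq0, norm_zero, zero_pow (by omega : d ≠ 0), mul_zero]
    · have hu : ‖‖x‖⁻¹ • x‖ = 1 := norm_smul_inv_norm hx
      have hxx : ‖x‖ • (‖x‖⁻¹ • x) = x := by
        rw [smul_smul, mul_inv_cancel₀ (norm_ne_zero_iff.mpr hx), one_smul]
      have h1 := hhom ‖x‖ (‖x‖⁻¹ • x)
      rw [hxx] at h1
      rw [h1, mul_comm (‖x‖ ^ d) _]
      exact mul_le_mul_of_nonneg_right (hsphere _ hu) (pow_nonneg (norm_nonneg x) d)
  -- upper bound
  set C := 1 + ∑ k : Fin (n + 1), ‖A k‖ ^ (e k) with hC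
  have hsumAnn : 0 ≤ ∑ k : Fin (n + 1), ‖A k‖ ^ (e k) :=
    Finset.sum_nonneg fun k _ => pow_nonneg (norm_nonneg _) _
  have hCpos : 0 < C := by rw [hC]; linarith
  have hbound : ∀ (k) (x : X), (A k (fun _ => x)) ^ (e k) ≤ ‖A k‖ ^ (e k) * ‖x‖ ^ d := by
    intro k x
    rcases eq_or_ne (k : ℕ) 0 with h | h
    · have hk0 : k = 0 := Fin.ext (by simpa using h)
      rw [hk0, hterm0]
      positivity
    · have hle : |A k (fun _ => x)| ≤ ‖A k‖ * ‖x‖ ^ (k : ℕ) := by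
        have h1 := (A k).le_opNorm (fun _ => x)
        simpa [Finset.prod_const, Real.norm_eq_abs] using h1
      calc (A k (fun _ => x)) ^ (e k) = |A k (fun _ => x)| ^ (e k) := ((heven k).pow_abs _).symm
        _ ≤ (‖A k‖ * ‖x‖ ^ (k : ℕ)) ^ (e k) := pow_le_pow_left₀ (abs_nonneg _) hle _
        _ = ‖A k‖ ^ (e k) * ‖x‖ ^ ((k : ℕ) * e k) := by rw [mul_pow, ← pow_mul]
        _ = ‖A k‖ ^ (e k) * ‖x‖ ^ d := by rw [hke k h]
  have hup : ∀ x, q x ≤ C * ‖x‖ ^ d := by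
    intro x
    calc q x ≤ ∑ k : Fin (n + 1), ‖A k‖ ^ (e k) * ‖x‖ ^ d :=
        Finset.sum_le_sum fun k _ => hbound k x
      _ = (∑ k : Fin (n + 1), ‖A k‖ ^ (e k)) * ‖x‖ ^ d := (Finset.sum_mul _ _ _).symm
      _ ≤ C * ‖x‖ ^ d := by
          apply mul_le_mul_of_nonneg_right _ (by positivity)
          rw [hC]; linarith
  -- Lipschitz-type bound
  set L := ∑ k : Fin (n + 1), (e k : ℝ) * (1 + ‖A k‖) ^ (e k - 1) * (‖A k‖ * (k : ℕ)) with hL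
  have hLnn : 0 ≤ L := Finset.sum_nonneg fun k _ => by positivity
  have hlip : ∀ x y : X, |q x - q y| ≤ L * max (max ‖x‖ ‖y‖) 1 ^ (d - 1) * ‖x - y‖ := by
    intro x y
    set R := max (max ‖x‖ ‖y‖) 1 with hR
    have hR1 : (1 : ℝ) ≤ R := le_max_right _ _
    have hR0 : (0 : ℝ) < R := lt_of_lt_of_le one_pos hR1
    have hxR : ‖x‖ ≤ R := (le_max_left _ _).trans (le_max_left _ _)
    have hyR : ‖y‖ ≤ R := (le_max_right _ _).trans (le_max_left _ _)
    have hterm : ∀ k : Fin (n + 1),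
        |(A k (fun _ => x)) ^ (e k) - (A k (fun _ => y)) ^ (e k)| ≤
          ((e k : ℝ) * (1 + ‖A k‖) ^ (e k - 1) * (‖A k‖ * (k : ℕ))) * R ^ (d - 1) * ‖x - y‖ := by
      intro k
      rcases eq_or_ne (k : ℕ) 0 with h | h
      · have hk0 : k = 0 := Fin.ext (by simpa using h)
        rw [hk0, hterm0, hterm0]
        simp
      · haveI : Nonempty (Fin (k : ℕ)) := ⟨⟨0, by omega⟩⟩
        have hk1 : 1 ≤ (k : ℕ) := by omega
        have hopx : |A k (fun _ => x)| ≤ ‖A k‖ * ‖x‖ ^ (k : ℕ) := by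
          have h1 := (A k).le_opNorm (fun _ => x)
          simpa [Finset.prod_const, Real.norm_eq_abs] using h1
        have hopy : |A k (fun _ => y)| ≤ ‖A k‖ * ‖y‖ ^ (k : ℕ) := by
          have h1 := (A k).le_opNorm (fun _ => y)
          simpa [Finset.prod_const, Real.norm_eq_abs] using h1
        have hka : |A k (fun _ => x)| ≤ (1 + ‖A k‖) * R ^ (k : ℕ) := by
          calc |A k (fun _ => x)| ≤ ‖A k‖ * ‖x‖ ^ (k : ℕ) := hopx
            _ ≤ (1 + ‖A k‖) * R ^ (k : ℕ) := by
                apply mul_le_mul (by linarith)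
                  (pow_le_pow_left₀ (norm_nonneg x) hxR _) (by positivity) (by positivity)
        have hkb : |A k (fun _ => y)| ≤ (1 + ‖A k‖) * R ^ (k : ℕ) := by
          calc |A k (fun _ => y)| ≤ ‖A k‖ * ‖y‖ ^ (k : ℕ) := hopy
            _ ≤ (1 + ‖A k‖) * R ^ (k : ℕ) := by
                apply mul_le_mul (by linarith)
                  (pow_le_pow_left₀ (norm_nonneg y) hyR _) (by positivity) (by positivity)
        have hab : |A k (fun _ => x) - A k (fun _ => y)| ≤
            ‖A k‖ * (k : ℕ) * R ^ ((k : ℕ) - 1) * ‖x - y‖ := by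
          have h1 := (A k).norm_image_sub_le (fun _ => x) (fun _ => y)
          have hm1 : ‖(fun _ : Fin (k : ℕ) => x)‖ = ‖x‖ := pi_norm_const x
          have hm2 : ‖(fun _ : Fin (k : ℕ) => y)‖ = ‖y‖ := pi_norm_const y
          have hsub : (fun _ : Fin (k : ℕ) => x) - (fun _ => y) = (fun _ => x - y) := rfl
          rw [hm1, hm2, hsub, pi_norm_const, Real.norm_eq_abs, Fintype.card_fin] at h1
          calc |A k (fun _ => x) - A k (fun _ => y)|
              ≤ ‖A k‖ * (k : ℕ) * max ‖x‖ ‖y‖ ^ ((k : ℕ) - 1) * ‖x - y‖ := h1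
            _ ≤ ‖A k‖ * (k : ℕ) * R ^ ((k : ℕ) - 1) * ‖x - y‖ := by
                apply mul_le_mul_of_nonneg_right _ (norm_nonneg _)
                apply mul_le_mul_of_nonneg_left _ (by positivity)
                apply pow_le_pow_left₀ (le_trans (norm_nonneg x) (le_max_left _ _))
                  (le_max_left _ _)
        have habs := abs_pow_sub_pow_le' hka hkb (e k)
        have hkd : (k : ℕ) ≤ d := by
          rw [← hke k h]
          exact Nat.le_mul_of_pos_right _ (he1 k)
        have hexp : (k : ℕ) * (e k - 1) + ((k : ℕ) - 1) = d - 1 := by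
          have hsucc : e k - 1 + 1 = e k := by have := he1 k; omega
          have h2 : (k : ℕ) * (e k - 1) + (k : ℕ) = d := by
            calc (k : ℕ) * (e k - 1) + (k : ℕ) = (k : ℕ) * ((e k - 1) + 1) := by ring
              _ = d := by rw [hsucc, hke k h]
          omega
        calc |(A k (fun _ => x)) ^ (e k) - (A k (fun _ => y)) ^ (e k)|
            ≤ (e k : ℝ) * ((1 + ‖A k‖) * R ^ (k : ℕ)) ^ (e k - 1) *
              |A k (fun _ => x) - A k (fun _ => y)| := habs
          _ ≤ (e k : ℝ) * ((1 + ‖A k‖) * R ^ (k : ℕ)) ^ (e k - 1) *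
              (‖A k‖ * (k : ℕ) * R ^ ((k : ℕ) - 1) * ‖x - y‖) := by
              apply mul_le_mul_of_nonneg_left hab (by positivity)
          _ = (e k : ℝ) * (1 + ‖A k‖) ^ (e k - 1) * (‖A k‖ * (k : ℕ)) *
              (R ^ ((k : ℕ) * (e k - 1)) * R ^ ((k : ℕ) - 1)) * ‖x - y‖ := by
              rw [mul_pow, ← pow_mul]
              ring
          _ = (e k : ℝ) * (1 + ‖A k‖) ^ (e k - 1) * (‖A k‖ * (k : ℕ)) *
              R ^ (d - 1) * ‖x - y‖ := by
              rw [← pow_add, hexp]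
    calc |q x - q y|
        = |∑ k : Fin (n + 1), ((A k (fun _ => x)) ^ (e k) - (A k (fun _ => y)) ^ (e k))| := by
          simp only [hq]
          rw [Finset.sum_sub_distrib]
      _ ≤ ∑ k : Fin (n + 1),
            |(A k (fun _ => x)) ^ (e k) - (A k (fun _ => y)) ^ (e k)| :=
          Finset.abs_sum_le_sum_abs _ _
      _ ≤ ∑ k : Fin (n + 1),
            ((e k : ℝ) * (1 + ‖A k‖) ^ (e k - 1) * (‖A k‖ * (k : ℕ))) * R ^ (d - 1) * ‖x - y‖ :=
          Finset.sum_le_sum fun k _ => hterm k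
      _ = L * R ^ (d - 1) * ‖x - y‖ := by
          rw [hL, ← Finset.sum_mul, ← Finset.sum_mul]
  exact ⟨q, d, δ, C, L, hd1, hδpos, hCpos, hLnn, hq0, hqa, hlow, hup, hlip⟩

lemma aux_main {X : Type*} [NormedAddCommGroup X] [NormedSpace ℝ X]
    (q : X → ℝ) (d : ℕ) (hd : 1 ≤ d) (δ C L : ℝ) (hδ : 0 < δ) (hC0 : 0 < C) (hL : 0 ≤ L)
    (hq0 : q 0 = 0) (hqa : ∀ x, AnalyticAt ℝ q x)
    (hlow : ∀ x, δ * ‖x‖ ^ d ≤ q x) (hup : ∀ x, q x ≤ C * ‖x‖ ^ d)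
    (hlip : ∀ x y : X, |q x - q y| ≤ L * max (max ‖x‖ ‖y‖) 1 ^ (d - 1) * ‖x - y‖) :
    ∃ Q : X → ℝ, (∀ x, 0 ≤ Q x) ∧ (∃ K : ℝ≥0, LipschitzWith K Q) ∧
      (∀ x, AnalyticAt ℝ Q x) ∧ Q 0 = 0 ∧
      ∃ M m : ℝ, 0 < M ∧ 0 < m ∧ ∀ x : X, M ≤ ‖x‖ → m * ‖x‖ ≤ Q x := by
  have hd0 : (d : ℝ) ≠ 0 := by positivity
  have hdR : (1:ℝ) ≤ (d:ℝ) := by exact_mod_cast hd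
  set α : ℝ := ((d : ℝ))⁻¹ with hαdef
  have hα0 : 0 < α := by rw [hαdef]; positivity
  have hα1 : α ≤ 1 := by rw [hαdef]; exact inv_le_one_of_one_le₀ hdR
  have hqnn : ∀ x, 0 ≤ q x := fun x => le_trans (by positivity) (hlow x)
  have h1q : ∀ x, (0:ℝ) < 1 + q x := fun x => by linarith [hqnn x]
  set Q : X → ℝ := fun x => (1 + q x) ^ α - 1 with hQdef
  have hQnn : ∀ x, 0 ≤ Q x := by
    intro x
    have : (1:ℝ) = (1:ℝ) ^ α := (Real.one_rpow α).symm
    have h := Real.rpow_le_rpow zero_le_one (by linarith [hqnn x] : (1:ℝ) ≤ 1 + q x) hα0.le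
    rw [Real.one_rpow] at h
    simp only [hQdef]
    linarith
  -- monotonicity of Q in q
  have hQmono : ∀ x y : X, q y ≤ q x → Q y ≤ Q x := by
    intro x y h
    have := Real.rpow_le_rpow (h1q y).le (by linarith : 1 + q y ≤ 1 + q x) hα0.le
    simp only [hQdef]
    linarith
  -- upper growth bound
  have hQup : ∀ x, Q x ≤ C ^ α * ‖x‖ := by
    intro x
    have h1 : (1 + q x) ^ α ≤ 1 + (q x) ^ α := one_add_rpow_le (hqnn x) hα0.le hα1
    have h2 : (q x) ^ α ≤ (C * ‖x‖ ^ d) ^ α :=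
      Real.rpow_le_rpow (hqnn x) (hup x) hα0.le
    have h3 : (C * ‖x‖ ^ d) ^ α = C ^ α * ‖x‖ := by
      rw [Real.mul_rpow hC0.le (by positivity), hαdef,
        Real.pow_rpow_inv_natCast (norm_nonneg x) (by omega)]
    simp only [hQdef]
    rw [h3] at h2
    linarith
  -- lower bound for large x
  have hQlow : ∀ x : X, δ ^ α * ‖x‖ - 1 ≤ Q x := by
    intro x
    have h1 : (δ * ‖x‖ ^ d) ^ α ≤ (1 + q x) ^ α :=
      Real.rpow_le_rpow (by positivity) (by linarith [hlow x]) hα0.le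
    have h3 : (δ * ‖x‖ ^ d) ^ α = δ ^ α * ‖x‖ := by
      rw [Real.mul_rpow hδ.le (by positivity), hαdef,
        Real.pow_rpow_inv_natCast (norm_nonneg x) (by omega)]
    simp only [hQdef]
    rw [h3] at h1
    linarith
  set β : ℝ := C ^ α with hβdef
  have hβ0 : 0 < β := Real.rpow_pos_of_pos hC0 α
  set B : ℝ := max 1 (2 ^ (d-1) * δ ^ (α - 1)) with hBdef
  have hB1 : (1:ℝ) ≤ B := le_max_left _ _
  have hB0 : 0 < B := lt_of_lt_of_le one_pos hB1
  set K' : ℝ := max (2 * β) (α * L * B) with hK'def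
  have hK'0 : 0 ≤ K' := le_trans (by positivity) (le_max_left _ _)
  -- the key one-sided Lipschitz estimate
  have key : ∀ x y : X, q y ≤ q x → Q x - Q y ≤ K' * ‖x - y‖ := by
    intro x y hqyx
    set r : ℝ := max ‖x‖ ‖y‖ with hrdef
    have hr0 : 0 ≤ r := le_trans (norm_nonneg x) (le_max_left _ _)
    rcases le_or_gt r (2 * ‖x - y‖) with hA | hB
    · -- far case
      have h1 : Q x - Q y ≤ Q x := by linarith [hQnn y]
      have h2 : Q x ≤ β * ‖x‖ := hQup x
      have h3 : ‖x‖ ≤ r := le_max_left _ _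
      calc Q x - Q y ≤ β * ‖x‖ := by linarith
        _ ≤ β * r := by nlinarith
        _ ≤ β * (2 * ‖x - y‖) := by nlinarith
        _ = 2 * β * ‖x - y‖ := by ring
        _ ≤ K' * ‖x - y‖ := by
            apply mul_le_mul_of_nonneg_right (le_max_left _ _) (norm_nonneg _)
    · -- near case
      have hxy0 : 0 ≤ ‖x - y‖ := norm_nonneg _
      have hyr : r / 2 ≤ ‖y‖ := by
        have hx : ‖x‖ ≤ ‖y‖ + ‖x - y‖ := by
          have hxe : y + (x - y) = x := by abel
          calc ‖x‖ = ‖y + (x - y)‖ := by rw [hxe]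
            _ ≤ ‖y‖ + ‖x - y‖ := norm_add_le _ _
        have : r ≤ ‖y‖ + ‖x - y‖ := max_le hx (by linarith)
        linarith
      have hb : δ * (r/2) ^ d ≤ q y := by
        refine le_trans ?_ (hlow y)
        apply mul_le_mul_of_nonneg_left (pow_le_pow_left₀ (by positivity) hyr d) hδ.le
      set R : ℝ := max r 1 with hRdef
      have hR1 : (1:ℝ) ≤ R := le_max_right _ _
      have hR0 : (0:ℝ) < R := lt_of_lt_of_le one_pos hR1
      -- claim : R^(d-1) ≤ B * (1+q y)^(1-α)
      have hone : (1:ℝ) ≤ (1 + q y) ^ (1 - α) := by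
        have h := Real.rpow_le_rpow zero_le_one
          (by linarith [hqnn y] : (1:ℝ) ≤ 1 + q y) (by linarith : 0 ≤ 1 - α)
        rwa [Real.one_rpow] at h
      have claim : R ^ (d-1) ≤ B * (1 + q y) ^ (1 - α) := by
        rcases le_total r 1 with hr1 | hr1
        · have : R = 1 := max_eq_right hr1
          rw [this, one_pow]
          calc (1:ℝ) ≤ 1 * (1 + q y) ^ (1 - α) := by linarith
            _ ≤ B * (1 + q y) ^ (1 - α) := by nlinarith
        · have hRr : R = r := max_eq_left hr1
          have h1 : (δ * (r/2) ^ d) ^ (1 - α) ≤ (1 + q y) ^ (1 - α) := by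
            apply Real.rpow_le_rpow (by positivity) (by linarith) (by linarith)
          have h2 : (δ * (r/2) ^ d) ^ (1 - α) = δ ^ (1 - α) * (r/2) ^ (d - 1) := by
            rw [Real.mul_rpow hδ.le (by positivity)]
            congr 1
            rw [← Real.rpow_natCast (r/2) d, ← Real.rpow_mul (by positivity)]
            have hcast : (d:ℝ) * (1 - α) = ((d - 1 : ℕ) : ℝ) := by
              rw [Nat.cast_sub hd, hαdef, mul_sub, mul_one, mul_inv_cancel₀ hd0, Nat.cast_one]
            rw [hcast, Real.rpow_natCast]
          rw [h2] at h1
          -- (r/2)^(d-1) ≤ δ^(α-1) * (1+q y)^(1-α)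
          have hδpow : (0:ℝ) < δ ^ (α - 1) := Real.rpow_pos_of_pos hδ _
          have hδδ : δ ^ (α - 1) * δ ^ (1 - α) = 1 := by
            rw [← Real.rpow_add hδ]
            norm_num
          have h4 : (r/2) ^ (d-1) ≤ δ ^ (α - 1) * (1 + q y) ^ (1 - α) := by
            have := mul_le_mul_of_nonneg_left h1 hδpow.le
            calc (r/2) ^ (d-1) = δ ^ (α - 1) * δ ^ (1 - α) * (r/2) ^ (d-1) := by
                  rw [hδδ, one_mul]
              _ = δ ^ (α - 1) * (δ ^ (1 - α) * (r/2) ^ (d-1)) := by ring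
              _ ≤ δ ^ (α - 1) * (1 + q y) ^ (1 - α) := this
          have h5 : r ^ (d-1) = 2 ^ (d-1) * (r/2) ^ (d-1) := by
            rw [div_pow, mul_div_cancel₀]
            positivity
          rw [hRr, h5]
          calc 2 ^ (d-1) * (r/2) ^ (d-1)
              ≤ 2 ^ (d-1) * (δ ^ (α - 1) * (1 + q y) ^ (1 - α)) := by
                apply mul_le_mul_of_nonneg_left h4 (by positivity)
            _ = (2 ^ (d-1) * δ ^ (α - 1)) * (1 + q y) ^ (1 - α) := by ring
            _ ≤ B * (1 + q y) ^ (1 - α) := by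
                apply mul_le_mul_of_nonneg_right (le_max_right _ _) (by linarith)
      -- combine
      have hpowinv : (1 + q y) ^ (α - 1) * (1 + q y) ^ (1 - α) = 1 := by
        rw [← Real.rpow_add (h1q y)]
        norm_num
      have hpnn : (0:ℝ) ≤ (1 + q y) ^ (α - 1) := Real.rpow_nonneg (h1q y).le _
      have hcomb : (1 + q y) ^ (α - 1) * R ^ (d-1) ≤ B := by
        calc (1 + q y) ^ (α - 1) * R ^ (d-1)
            ≤ (1 + q y) ^ (α - 1) * (B * (1 + q y) ^ (1 - α)) :=
              mul_le_mul_of_nonneg_left claim hpnn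
          _ = B * ((1 + q y) ^ (α - 1) * (1 + q y) ^ (1 - α)) := by ring
          _ = B := by rw [hpowinv, mul_one]
      have step1 : Q x - Q y ≤ α * (1 + q y) ^ (α - 1) * (q x - q y) := by
        simp only [hQdef]
        have := rpow_sub_rpow_le (hqnn y) hqyx hα0.le hα1
        linarith
      have step2 : q x - q y ≤ L * R ^ (d-1) * ‖x - y‖ := by
        have := hlip x y
        rw [← hrdef, ← hRdef] at this
        exact le_trans (le_abs_self _) this
      calc Q x - Q y ≤ α * (1 + q y) ^ (α - 1) * (q x - q y) := step1
        _ ≤ α * (1 + q y) ^ (α - 1) * (L * R ^ (d-1) * ‖x - y‖) := by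
            apply mul_le_mul_of_nonneg_left step2 (by positivity)
        _ = α * L * ((1 + q y) ^ (α - 1) * R ^ (d-1)) * ‖x - y‖ := by ring
        _ ≤ α * L * B * ‖x - y‖ := by
            apply mul_le_mul_of_nonneg_right _ hxy0
            apply mul_le_mul_of_nonneg_left hcomb (by positivity)
        _ ≤ K' * ‖x - y‖ :=
            mul_le_mul_of_nonneg_right (le_max_right _ _) hxy0
  refine ⟨Q, hQnn, ⟨K'.toNNReal, ?_⟩, ?_, ?_, ?_⟩
  · -- Lipschitz
    apply LipschitzWith.of_dist_le_mul
    intro x y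
    rw [Real.dist_eq, dist_eq_norm]
    have hcoe : (K'.toNNReal : ℝ) = max K' 0 := Real.coe_toNNReal' K'
    have hK'le : K' ≤ (K'.toNNReal : ℝ) := by rw [hcoe]; exact le_max_left _ _
    rcases le_total (q y) (q x) with h | h
    · rw [abs_of_nonneg (by linarith [hQmono x y h])]
      calc Q x - Q y ≤ K' * ‖x - y‖ := key x y h
        _ ≤ (K'.toNNReal : ℝ) * ‖x - y‖ :=
            mul_le_mul_of_nonneg_right hK'le (norm_nonneg _)
    · rw [abs_of_nonpos (by linarith [hQmono y x h]), neg_sub]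
      calc Q y - Q x ≤ K' * ‖y - x‖ := key y x h
        _ = K' * ‖x - y‖ := by rw [norm_sub_rev]
        _ ≤ (K'.toNNReal : ℝ) * ‖x - y‖ :=
            mul_le_mul_of_nonneg_right hK'le (norm_nonneg _)
  · -- analytic
    intro x
    have h1 : AnalyticAt ℝ (fun x : X => 1 + q x) x := analyticAt_const.add (hqa x)
    have h2 := AnalyticAt.comp (g := fun s : ℝ => s ^ α) (f := fun x : X => 1 + q x)
      (analyticAt_rpow_const (h1q x)) h1
    exact h2.sub analyticAt_const
  · simp only [hQdef, hq0]
    norm_num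
  · -- separation
    refine ⟨max (4 / δ ^ α) 1, δ ^ α / 2, lt_of_lt_of_le one_pos (le_max_right _ _),
      by positivity, ?_⟩
    intro x hx
    have hδα : (0:ℝ) < δ ^ α := Real.rpow_pos_of_pos hδ α
    have h4 : 4 / δ ^ α ≤ ‖x‖ := le_trans (le_max_left _ _) hx
    have h2 : 2 ≤ δ ^ α * ‖x‖ := by
      rw [div_le_iff₀ hδα] at h4
      nlinarith
    have h5 := hQlow x
    calc δ ^ α / 2 * ‖x‖ = (δ ^ α * ‖x‖) / 2 := by ring
      _ ≤ δ ^ α * ‖x‖ - 1 := by linarith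
      _ ≤ Q x := h5

/-- Every real Banach space with a separating polynomial admits a
Lipschitz, real analytic separating function: a function `Q : X → [0,∞)`, Lipschitz on all
of `X`, real analytic, with `Q 0 = 0` and `Q x ≥ m‖x‖` whenever `‖x‖ ≥ M`, for some
`M, m > 0`. -/
theorem stmt19 (X : Type*) [NormedAddCommGroup X] [NormedSpace ℝ X] [CompleteSpace X]
    (hsep : HasSeparatingPoly X) :
    ∃ Q : X → ℝ, (∀ x, 0 ≤ Q x) ∧ (∃ K : ℝ≥0, LipschitzWith K Q) ∧
      (∀ x, AnalyticAt ℝ Q x) ∧ Q 0 = 0 ∧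
      ∃ M m : ℝ, 0 < M ∧ 0 < m ∧ ∀ x : X, M ≤ ‖x‖ → m * ‖x‖ ≤ Q x := by
  obtain ⟨P, ⟨n, A, hPA⟩, hP0, c, hc, hsph⟩ := hsep
  by_cases hX : ∀ x : X, x = 0
  · refine ⟨fun _ => 0, fun _ => le_refl 0, ⟨0, LipschitzWith.const 0⟩,
      fun _ => analyticAt_const, rfl, 1, 1, one_pos, one_pos, ?_⟩
    intro x h1x
    rw [hX x, norm_zero] at h1x
    linarith
  · push_neg at hX
    obtain ⟨x₀, hx₀⟩ := hX
    have hu₀ : ‖‖x₀‖⁻¹ • x₀‖ = 1 := norm_smul_inv_norm hx₀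
    have hA0c : ∀ z : X, A 0 (fun _ => z) = A 0 (fun _ => (0 : X)) := by
      intro z
      congr 1
      funext i
      exact absurd i.isLt (by simp)
    have hsph' : ∀ u : X, ‖u‖ = 1 → c ≤ ∑ k : Fin (n + 1), A k (fun _ => u) := by
      intro u hu
      rw [← hPA u]
      exact hsph u hu
    have hA0 : ∀ z : X, A 0 (fun _ => z) = 0 := by
      have h0 : A 0 (fun _ => (0 : X)) = 0 := by
        have h1 := hPA 0
        rw [hP0, ← Finset.add_sum_erase _ _ (Finset.mem_univ (0 : Fin (n + 1)))] at h1
        have h2 : ∑ k ∈ Finset.univ.erase (0 : Fin (n + 1)), A k (fun _ => (0 : X)) = 0 := by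
          apply Finset.sum_eq_zero
          intro k hk
          have hk0 : (k : ℕ) ≠ 0 := fun hh =>
            (Finset.mem_erase.mp hk).1 (Fin.ext (by simpa using hh))
          haveI : Nonempty (Fin (k : ℕ)) := ⟨⟨0, by omega⟩⟩
          exact (A k).map_zero
        rw [h2, add_zero] at h1
        exact h1.symm
      intro z
      rw [hA0c z, h0]
    have hn : 1 ≤ n := by
      by_contra hcon
      have hn0 : n = 0 := by omega
      subst hn0
      have h1 := hsph' _ hu₀
      have h2 : ∑ k : Fin (0 + 1), A k (fun _ => ‖x₀‖⁻¹ • x₀) =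
          A 0 (fun _ => ‖x₀‖⁻¹ • x₀) := by
        rw [Fin.sum_univ_one]
      rw [h2, hA0] at h1
      linarith
    obtain ⟨q, d, δ, C, L, hd1, hδpos, hCpos, hLnn, hq0, hqa, hlow, hup, hlip⟩ :=
      exists_good_q n hn A c hc hA0 hsph'
    exact aux_main q d hd1 δ C L hδpos hCpos hLnn hq0 hqa hlow hup hlip
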